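/- Let z ∈ ℂ_+ with |z| bounded, and suppose u ∈ ℂ satisfies u^2 + zu + 1 + r = 0 with |r| ≤ 1. Then min{|u - m(z)|, |u - m̃(z)|} ≤ C|r|/√(κ + η + |r|) for some constant C, where m, m̃ are the two roots of w^2 + zw + 1 = 0 and κ = ||Re z| - 2|, η = Im z. -/

import Mathlib

private lemma core_ineq (s t a b : ℝ) (hs : 0 < s) (ht : 0 ≤ t) (ha : 0 ≤ a)
    (hab : a * b = t) (hle : a ≤ b) (hsum : Real.sqrt s ≤ a + b) :
    a ≤ 4 * t / Real.sqrt (s + t) := by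
  have hb : 0 < b := by nlinarith [Real.sqrt_pos.mpr hs]
  have hbt : Real.sqrt t ≤ b := by
    have h1 : t ≤ b ^ 2 := by nlinarith
    calc Real.sqrt t ≤ Real.sqrt (b ^ 2) := Real.sqrt_le_sqrt h1
      _ = b := Real.sqrt_sq hb.le
  have hst : Real.sqrt (s + t) ≤ Real.sqrt s + Real.sqrt t := by
    rw [← Real.sqrt_sq (by positivity : (0:ℝ) ≤ Real.sqrt s + Real.sqrt t)]
    apply Real.sqrt_le_sqrt
    nlinarith [Real.sq_sqrt hs.le, Real.sq_sqrt ht, Real.sqrt_nonneg s, Real.sqrt_nonneg t]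
  have h3b : Real.sqrt (s + t) ≤ 3 * b := by linarith
  have hpos : 0 < Real.sqrt (s + t) := Real.sqrt_pos.mpr (by linarith)
  rw [le_div_iff₀ hpos]
  nlinarith [mul_le_mul_of_nonneg_left h3b ha]

private lemma root_gap (z m mt : ℂ) (hzim : 0 < z.im)
    (hm : m ^ 2 + z * m + 1 = 0) (hmt : mt ^ 2 + z * mt + 1 = 0)
    (hmim : 0 < m.im) (hmtim : mt.im < 0) :
    (m + mt + z = 0 ∧ m * mt = 1) ∧
      Real.sqrt (|(|z.re| - 2)| + z.im) ≤ ‖m - mt‖ := by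
  have hne : m - mt ≠ 0 := sub_ne_zero.mpr (by
    intro h; rw [h] at hmim; linarith)
  have hkey : (m - mt) * (m + mt + z) = 0 := by linear_combination hm - hmt
  have hplus : m + mt + z = 0 := by
    rcases mul_eq_zero.mp hkey with h | h
    · exact absurd h hne
    · exact h
  have hprod : m * mt = 1 := by linear_combination m * hplus - hm
  have hsq : (m - mt) ^ 2 = z ^ 2 - 4 := by
    linear_combination hm + hmt - z * hplus - 2 * hprod
  refine ⟨⟨hplus, hprod⟩, ?_⟩
  -- lower bound on |z² - 4|
  have habs : ‖z ^ 2 - 4‖ = ‖z - 2‖ * ‖z + 2‖ := by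
    rw [← norm_mul]; ring_nf
  have h1 : |z.re - 2| ≤ ‖z - 2‖ := by
    simpa using Complex.abs_re_le_norm (z - 2)
  have h2 : z.im ≤ ‖z - 2‖ := by
    have := Complex.abs_im_le_norm (z - 2)
    simp only [Complex.sub_im] at this
    have h0 : (2 : ℂ).im = 0 := rfl
    rw [h0] at this
    calc z.im ≤ |z.im - 0| := by rw [sub_zero]; exact le_abs_self _
      _ ≤ ‖z - 2‖ := this
  have h3 : |z.re + 2| ≤ ‖z + 2‖ := by
    simpa using Complex.abs_re_le_norm (z + 2)
  have h4 : z.im ≤ ‖z + 2‖ := by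
    have := Complex.abs_im_le_norm (z + 2)
    simp only [Complex.add_im] at this
    have h0 : (2 : ℂ).im = 0 := rfl
    rw [h0] at this
    calc z.im ≤ |z.im + 0| := by rw [add_zero]; exact le_abs_self _
      _ ≤ ‖z + 2‖ := this
  have hA : 0 ≤ ‖z - 2‖ := norm_nonneg _
  have hB : 0 ≤ ‖z + 2‖ := norm_nonneg _
  have hlow : |(|z.re| - 2)| + z.im ≤ ‖z ^ 2 - 4‖ := by
    rw [habs]
    rcases le_or_gt 0 z.re with hre | hre
    · have hκ : |(|z.re| - 2)| = |z.re - 2| := by rw [abs_of_nonneg hre]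
      rw [hκ]
      have hB2 : (2:ℝ) ≤ ‖z + 2‖ := by
        have : (2:ℝ) ≤ |z.re + 2| := by rw [abs_of_nonneg (by linarith)]; linarith
        linarith
      nlinarith [abs_nonneg (z.re - 2)]
    · have hκ : |(|z.re| - 2)| = |z.re + 2| := by
        rw [abs_of_neg hre, show -z.re - 2 = -(z.re + 2) by ring, abs_neg]
      rw [hκ]
      have hA2 : (2:ℝ) ≤ ‖z - 2‖ := by
        have : (2:ℝ) ≤ |z.re - 2| := by
          rw [abs_of_nonpos (by linarith)]; linarith
        linarith
      nlinarith [abs_nonneg (z.re + 2)]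
  have hsqabs : ‖m - mt‖ ^ 2 = ‖z ^ 2 - 4‖ := by
    rw [← norm_pow, hsq]
  calc Real.sqrt (|(|z.re| - 2)| + z.im) ≤ Real.sqrt (‖m - mt‖ ^ 2) := by
        apply Real.sqrt_le_sqrt; rw [hsqabs]; exact hlow
    _ = ‖m - mt‖ := Real.sqrt_sq (norm_nonneg _)

/-- Stability of the self-consistent quadratic equation: if `u² + zu + 1 + r = 0`
with `|r| ≤ 1` and `z` in a bounded domain of the upper half-plane, then `u` is
within `C|r|/√(κ + η + |r|)` of one of the two roots `m ∈ ℂ₊`, `m̃ ∈ ℂ₋` of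
`w² + zw + 1 = 0`, where `κ = ||Re z| - 2|` and `η = Im z`. -/
theorem quadratic_stability (τ : ℝ) (hτ : 0 < τ) :
    ∃ C : ℝ, 0 < C ∧
      ∀ z u r m mt : ℂ, 0 < z.im → ‖z‖ ≤ τ →
        u ^ 2 + z * u + 1 + r = 0 → ‖r‖ ≤ 1 →
        0 < m.im → mt.im < 0 →
        m ^ 2 + z * m + 1 = 0 → mt ^ 2 + z * mt + 1 = 0 →
        min ‖u - m‖ ‖u - mt‖ ≤
          C * ‖r‖ / Real.sqrt (|(|z.re| - 2)| + z.im + ‖r‖) := by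
  refine ⟨4, by norm_num, ?_⟩
  intro z u r m mt hzim hzτ hu hr hmim hmtim hm hmt
  obtain ⟨⟨hplus, hprod⟩, hgap⟩ := root_gap z m mt hzim hm hmt hmim hmtim
  set a := ‖u - m‖ with ha_def
  set b := ‖u - mt‖ with hb_def
  set t := ‖r‖ with ht_def
  set s := |(|z.re| - 2)| + z.im with hs_def
  have hs : 0 < s := by
    have := abs_nonneg (|z.re| - 2); simp only [hs_def]; linarith
  have ht : 0 ≤ t := norm_nonneg _
  have hfac : (u - m) * (u - mt) = -r := by
    linear_combination hu - u * hplus + hprod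
  have hab : a * b = t := by
    rw [ha_def, hb_def, ht_def, ← norm_mul, hfac, norm_neg]
  have htri : ‖m - mt‖ ≤ a + b := by
    have heq : m - mt = (u - mt) - (u - m) := by ring
    rw [heq, ha_def, hb_def]
    calc ‖(u - mt) - (u - m)‖ ≤
        ‖u - mt‖ + ‖u - m‖ :=
          norm_sub_le _ _
      _ = ‖u - m‖ + ‖u - mt‖ := by ring
  have hsum : Real.sqrt s ≤ a + b := le_trans hgap htri
  rcases le_total a b with hle | hle
  · rw [min_eq_left hle]
    exact core_ineq s t a b hs ht (norm_nonneg _) hab hle hsum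
  · rw [min_eq_right hle]
    have hab' : b * a = t := by rw [mul_comm]; exact hab
    have hsum' : Real.sqrt s ≤ b + a := by linarith
    exact core_ineq s t b a hs ht (norm_nonneg _) hab' hle hsum'
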